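/- Under the m-tree Markov model with spectral gap, the sample average up to an arbitrary node n (nodes ordered level-by-level) converges in L² to E_π(y): for any initial distribution ν, μ̂_n^{(ν)} = n^{-1} Σ_{k=1}^n y(X_k^{(ν)}) → E_π(y) in L² as n → ∞, even though n need not coincide with a complete generation count n_t. -/

import Mathlib

open MeasureTheory BigOperators Matrix Filter

namespace TreeAux
open Finset



/-- parent function on node indices (1 is the root, its parent is itself). -/
def pb (m k : ℕ) : ℕ := if k ≤ 1 then 1 else (k - 2) / m + 1

lemma pb_one_le (m k : ℕ) : 1 ≤ pb m k := by
  unfold pb; split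
  · omega
  · exact Nat.succ_le_succ (Nat.zero_le _)

lemma pb_lt (m : ℕ) {k : ℕ} (hk : 2 ≤ k) : pb m k < k := by
  unfold pb
  rw [if_neg (by omega)]
  have := Nat.div_le_self (k - 2) m
  omega

lemma pb_le {m k : ℕ} (hk : 1 ≤ k) : pb m k ≤ k := by
  rcases Nat.lt_or_ge k 2 with h | h
  · unfold pb; rw [if_pos (by omega)]; omega
  · exact (pb_lt m h).le

lemma pb_mono (m : ℕ) : Monotone (pb m) := by
  intro k l hkl
  unfold pb
  rcases le_or_gt l 1 with hl | hl
  · rw [if_pos (by omega), if_pos hl]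
  · rcases le_or_gt k 1 with hk | hk
    · rw [if_pos hk, if_neg (by omega)]
      exact Nat.succ_le_succ (Nat.zero_le _)
    · rw [if_neg (by omega), if_neg (by omega)]
      have := Nat.div_le_div_right (c := m) (Nat.sub_le_sub_right hkl 2)
      omega

/-- depth of a node (root `1` has depth 0). -/
def dep (m : ℕ) : ℕ → ℕ
  | k => if k ≤ 1 then 0 else dep m (pb m k) + 1
  termination_by k => k
  decreasing_by exact pb_lt m (by omega)

lemma dep_of_le_one {m k : ℕ} (h : k ≤ 1) : dep m k = 0 := by
  unfold dep; rw [if_pos h]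

lemma dep_succ {m k : ℕ} (h : 2 ≤ k) : dep m k = dep m (pb m k) + 1 := by
  conv_lhs => unfold dep
  rw [if_neg (by omega)]

lemma dep_eq_zero_iff {m k : ℕ} : dep m k = 0 ↔ k ≤ 1 := by
  constructor
  · intro h
    by_contra hk
    rw [dep_succ (by omega)] at h
    omega
  · exact dep_of_le_one

lemma dep_mono (m : ℕ) : Monotone (dep m) := by
  intro k l hkl
  induction l using Nat.strong_induction_on generalizing k with
  | _ l ih =>
    rcases le_or_gt k 1 with hk | hk
    · rw [dep_of_le_one hk]; omega
    · have hl : 2 ≤ l := by omega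
      rw [dep_succ (by omega : 2 ≤ k), dep_succ hl]
      have h1 : pb m k ≤ pb m l := pb_mono m hkl
      have h2 : pb m l < l := pb_lt m hl
      exact Nat.succ_le_succ (ih _ h2 h1)

lemma dep_iterate {m : ℕ} : ∀ (i k : ℕ), i ≤ dep m k →
    dep m ((pb m)^[i] k) = dep m k - i := by
  intro i
  induction i with
  | zero => intro k _; simp
  | succ i ih =>
    intro k hk
    have hk2 : 2 ≤ k := by
      by_contra h
      rw [dep_of_le_one (by omega)] at hk; omega
    rw [Function.iterate_succ_apply, ih _ (by rw [dep_succ hk2] at hk; omega),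
      dep_succ hk2]
    omega

lemma pb_iterate_one_le {m : ℕ} (i : ℕ) {k : ℕ} (hk : 1 ≤ k) : 1 ≤ (pb m)^[i] k := by
  induction i with
  | zero => simpa
  | succ i ih => rw [Function.iterate_succ_apply']; exact pb_one_le m _

lemma pb_iterate_le {m : ℕ} (i : ℕ) {k : ℕ} (hk : 1 ≤ k) : (pb m)^[i] k ≤ k := by
  induction i with
  | zero => simp
  | succ i ih =>
    rw [Function.iterate_succ_apply']
    exact le_trans (pb_le (pb_iterate_one_le i hk)) ih

lemma pb_iterate_dep {m k : ℕ} (hk : 1 ≤ k) : (pb m)^[dep m k] k = 1 := by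
  have h0 : dep m ((pb m)^[dep m k] k) = 0 := by
    rw [dep_iterate _ _ le_rfl]; omega
  have h1 : 1 ≤ (pb m)^[dep m k] k := pb_iterate_one_le _ hk
  rw [dep_eq_zero_iff] at h0
  omega

/-- fiber bound: each node has at most `m` children. -/
lemma pb_fiber {m b k : ℕ} (hm : 1 ≤ m) (hk : 2 ≤ k) (h : pb m k = b) :
    m * (b - 1) + 2 ≤ k ∧ k ≤ m * (b - 1) + m + 1 := by
  unfold pb at h
  rw [if_neg (by omega)] at h
  have hb1 : 1 ≤ b := by
    rw [← h]; exact Nat.succ_le_succ (Nat.zero_le _)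
  have hdiv : (k - 2) / m = b - 1 := by rw [← h, Nat.add_sub_cancel]
  have h1 : (b - 1) * m ≤ k - 2 := by
    rw [← Nat.le_div_iff_mul_le (by omega : 0 < m), hdiv]
  have h2 : k - 2 < b * m := by
    rw [← Nat.div_lt_iff_lt_mul (by omega : 0 < m), hdiv]; omega
  constructor
  · have := h1; nlinarith [Nat.sub_add_cancel hk, Nat.sub_add_cancel hb1]
  · nlinarith [Nat.sub_add_cancel hk, Nat.sub_add_cancel hb1]


lemma card_iterate_fiber {m : ℕ} (hm : 1 ≤ m) (n a : ℕ) : ∀ i : ℕ,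
    ((Icc 1 n).filter (fun k => (pb m)^[i] k = a ∧ i ≤ dep m k)).card ≤ m ^ i := by
  intro i
  induction i with
  | zero =>
    have hsub : (Icc 1 n).filter (fun k => (pb m)^[0] k = a ∧ 0 ≤ dep m k) ⊆ {a} := by
      intro k hk
      rw [Finset.mem_filter] at hk
      exact Finset.mem_singleton.mpr hk.2.1
    simpa using Finset.card_le_card hsub
  | succ i ih =>
    set s := (Icc 1 n).filter (fun k => (pb m)^[i+1] k = a ∧ i + 1 ≤ dep m k) with hs
    set t := (Icc 1 n).filter (fun k => (pb m)^[i] k = a ∧ i ≤ dep m k) with ht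
    have hks : ∀ k ∈ s, 2 ≤ k ∧ k ≤ n := by
      intro k hk
      simp only [hs, Finset.mem_filter, Finset.mem_Icc] at hk
      have : dep m k ≠ 0 := by omega
      rw [Ne, dep_eq_zero_iff] at this
      omega
    have hmaps : ∀ k ∈ s, pb m k ∈ t := by
      intro k hk
      obtain ⟨hk2, hkn⟩ := hks k hk
      simp only [hs, Finset.mem_filter, Finset.mem_Icc] at hk
      simp only [ht, Finset.mem_filter, Finset.mem_Icc]
      have hdk := dep_succ (m := m) hk2
      refine ⟨⟨pb_one_le m k, le_trans (pb_lt m hk2).le hkn⟩, ?_, by omega⟩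
      rw [← Function.iterate_succ_apply]
      exact hk.2.1
    have hfib : ∀ b ∈ t, (s.filter (fun k => pb m k = b)).card ≤ m := by
      intro b hb
      have hsub : s.filter (fun k => pb m k = b) ⊆ Icc (m*(b-1)+2) (m*(b-1)+m+1) := by
        intro k hk
        simp only [Finset.mem_filter] at hk
        obtain ⟨hk2, _⟩ := hks k hk.1
        obtain ⟨h1, h2⟩ := pb_fiber hm hk2 hk.2
        exact Finset.mem_Icc.mpr ⟨h1, h2⟩
      refine le_trans (Finset.card_le_card hsub) ?_
      rw [Nat.card_Icc]
      omega
    calc s.card ≤ m * t.card := Finset.card_le_mul_card_image_of_maps_to hmaps m hfib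
    _ ≤ m * m ^ i := by exact Nat.mul_le_mul_left m ih
    _ = m ^ (i+1) := by ring

lemma card_dep_le {m : ℕ} (hm : 1 ≤ m) (n t : ℕ) :
    ((Icc 1 n).filter (fun k => dep m k = t)).card ≤ m ^ t := by
  refine le_trans (Finset.card_le_card (fun k hk => ?_)) (card_iterate_fiber hm n 1 t)
  simp only [Finset.mem_filter, Finset.mem_Icc] at hk ⊢
  refine ⟨hk.1, ?_, by omega⟩
  rw [← hk.2]
  exact pb_iterate_dep (by omega)

lemma geom_lt_of_dep {m : ℕ} (hm : 1 ≤ m) : ∀ k : ℕ, 1 ≤ k →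
    ∑ s ∈ range (dep m k), m ^ s < k := by
  intro k
  induction k using Nat.strong_induction_on with
  | _ k ih =>
    intro hk
    rcases le_or_gt k 1 with hk1 | hk1
    · rw [dep_of_le_one hk1]; simpa using (show 0 < k by omega)
    · have hk2 : 2 ≤ k := by omega
      rw [dep_succ hk2]
      have hpb1 : 1 ≤ pb m k := pb_one_le m k
      have hpblt : pb m k < k := pb_lt m hk2
      have IH := ih _ hpblt hpb1
      have hpbval : pb m k = (k - 2) / m + 1 := by
        unfold pb; rw [if_neg (by omega)]
      have hIH2 : ∑ s ∈ range (dep m (pb m k)), m ^ s ≤ (k - 2) / m := by omega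
      have hmul : m * ∑ s ∈ range (dep m (pb m k)), m ^ s ≤ k - 2 := by
        calc m * ∑ s ∈ range (dep m (pb m k)), m ^ s ≤ m * ((k-2)/m) :=
          Nat.mul_le_mul_left m hIH2
        _ ≤ k - 2 := by
          rw [mul_comm]; exact Nat.div_mul_le_self _ _
      rw [Finset.sum_range_succ']
      simp only [pow_succ, pow_zero]
      calc (∑ s ∈ range (dep m (pb m k)), m ^ s * m) + 1
          = m * (∑ s ∈ range (dep m (pb m k)), m ^ s) + 1 := by
            rw [← Finset.sum_mul, mul_comm]
      _ ≤ (k - 2) + 1 := by omega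
      _ < k := by omega

lemma pow_pred_dep_lt {m : ℕ} (hm : 1 ≤ m) {k : ℕ} (hk : 1 ≤ k) (hd : 1 ≤ dep m k) :
    m ^ (dep m k - 1) < k := by
  have h := geom_lt_of_dep hm k hk
  refine lt_of_le_of_lt (le_trans ?_ (Finset.single_le_sum (f := fun s => m ^ s)
    (fun _ _ => Nat.zero_le _) (Finset.self_mem_range_succ (dep m k - 1)))) ?_
  · exact le_rfl
  · have : dep m k - 1 + 1 = dep m k := by omega
    rw [this]; exact h

lemma geom_dep_le {m : ℕ} (hm : 1 ≤ m) {k : ℕ} (hk : 1 ≤ k) :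
    ∑ s ∈ range (dep m k + 1), m ^ s ≤ 2 * m * k := by
  have h := geom_lt_of_dep hm k hk
  rw [Finset.sum_range_succ]
  have h2 : m ^ dep m k ≤ m * k := by
    rcases Nat.eq_zero_or_pos (dep m k) with h0 | h0
    · rw [h0, pow_zero]; nlinarith
    · have hlt := pow_pred_dep_lt hm hk h0
      have heq : m ^ dep m k = m * m ^ (dep m k - 1) := by
        rw [← pow_succ']; congr 1; omega
      rw [heq]; nlinarith
  nlinarith

lemma exists_dep {m : ℕ} (hm : 1 ≤ m) (t : ℕ) : ∃ k, 1 ≤ k ∧ dep m k = t := by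
  induction t with
  | zero => exact ⟨1, le_rfl, dep_of_le_one le_rfl⟩
  | succ t ih =>
    obtain ⟨k, hk1, hkd⟩ := ih
    refine ⟨m * (k - 1) + 2, by omega, ?_⟩
    have h2 : pb m (m * (k-1) + 2) = k := by
      unfold pb
      rw [if_neg (by omega)]
      rw [Nat.add_sub_cancel, Nat.mul_div_cancel_left _ (by omega : 0 < m)]
      omega
    rw [dep_succ (by omega), h2, hkd]

lemma tendsto_dep {m : ℕ} (hm : 1 ≤ m) :
    Filter.Tendsto (dep m) Filter.atTop Filter.atTop := by
  refine Filter.tendsto_atTop_atTop_of_monotone (dep_mono m) (fun b => ?_)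
  obtain ⟨k, _, hkd⟩ := exists_dep hm b
  exact ⟨k, hkd.ge⟩


lemma pb_eval (m k : ℕ) : pb m k = if k ≤ 1 then 1 else (k - 2) / m + 1 := rfl

lemma polygeom {r : ℝ} (h0 : 0 < r) (h1 : r < 1) :
    Filter.Tendsto (fun T : ℕ => ((T:ℝ)+1)^3 * r^T) Filter.atTop (nhds 0) := by
  have hinv : 1 < r⁻¹ := (one_lt_inv₀ h0).mpr h1
  have h := tendsto_pow_const_div_const_pow_of_one_lt 3 hinv
  have h2 := h.comp (Filter.tendsto_add_atTop_nat 1)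
  have h3 := h2.const_mul r⁻¹
  rw [mul_zero] at h3
  refine h3.congr (fun T => ?_)
  show r⁻¹ * (((T + 1 : ℕ) : ℝ)^3 / (r⁻¹)^(T+1)) = ((T:ℝ)+1)^3 * r^T
  have hr0 : r ≠ 0 := ne_of_gt h0
  rw [div_eq_mul_inv, ← inv_pow, inv_inv, pow_succ]
  push_cast
  field_simp
  ring

set_option maxHeartbeats 3000000 in
lemma eig_L2 {Ω : Type*} {m0 : MeasurableSpace Ω} (μ : Measure Ω) [IsProbabilityMeasure μ]
    {N : ℕ} (m : ℕ) (hm : 1 ≤ m) (P : Matrix (Fin N) (Fin N) ℝ)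
    (X : ℕ → Ω → Fin N) (pa : ℕ → ℕ) (hpa1 : pa 1 = 1)
    (hpa : ∀ k, 2 ≤ k → pa k = (k - 2) / m + 1)
    (F : Filtration ℕ m0) (hadapted : ∀ n : ℕ, Measurable[F n] (X (n + 1)))
    (hMarkov : ∀ (k : ℕ) (g : Fin N → ℝ),
      μ[(fun ω => g (X (k + 2) ω)) | F k] =ᵐ[μ]
        fun ω => ∑ j, P (X (pa (k + 2)) ω) j * g j)
    (lam1 : ℝ) (hl0 : 0 ≤ lam1) (hl1 : lam1 < 1)
    (g : Fin N → ℝ) (ρ : ℝ) (hg : P.mulVec g = ρ • g) (hρ : |ρ| ≤ lam1) :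
    Tendsto (fun n : ℕ =>
      ∫ ω, ((n : ℝ)⁻¹ * ∑ k ∈ Finset.Icc 1 n, g (X k ω)) ^ 2 ∂μ) atTop (nhds 0) := by
  -- basic facts
  set G : ℝ := ∑ i, |g i| with hGdef
  have hG : ∀ i, |g i| ≤ G := fun i =>
    Finset.single_le_sum (fun j _ => abs_nonneg (g j)) (Finset.mem_univ i)
  have hG0 : 0 ≤ G := Finset.sum_nonneg fun j _ => abs_nonneg (g j)
  have hpa' : ∀ k, 1 ≤ k → pa k = pb m k := by
    intro k hk
    rcases le_or_gt k 1 with h1 | h2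
    · have : k = 1 := by omega
      rw [this, hpa1, pb_eval]; simp
    · rw [hpa k (by omega), pb_eval, if_neg (by omega)]
  have hρ1 : |ρ| ≤ 1 := hρ.trans hl1.le
  have hXF : ∀ k : ℕ, 1 ≤ k → ∀ l, k ≤ l + 1 → Measurable[F l] (X k) := by
    intro k hk l hl
    have h := hadapted (k - 1)
    have hkk : k - 1 + 1 = k := by omega
    rw [hkk] at h
    exact h.mono (F.mono (by omega : k - 1 ≤ l)) le_rfl
  have hXm : ∀ k : ℕ, 1 ≤ k → Measurable (X k) := fun k hk =>
    (hXF k hk (k - 1) (by omega)).mono (F.le _) le_rfl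
  have hint : ∀ (h : Ω → ℝ) (C : ℝ), Measurable h → (∀ ω, |h ω| ≤ C) → Integrable h μ := by
    intro h C hh hb
    refine (integrable_const C).mono' hh.aestronglyMeasurable (ae_of_all μ ?_)
    intro ω; simpa [Real.norm_eq_abs] using hb ω
  set D : ℕ → Ω → ℝ := fun k ω => g (X k ω) - ρ * g (X (pb m k) ω) with hD
  have hDb : ∀ k ω, |D k ω| ≤ 2 * G := by
    intro k ω
    have h1 : |g (X k ω)| ≤ G := hG _
    have h2 : |ρ * g (X (pb m k) ω)| ≤ G := by
      rw [abs_mul]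
      have := hG (X (pb m k) ω)
      nlinarith [abs_nonneg ρ, abs_nonneg (g (X (pb m k) ω))]
    have : |D k ω| ≤ |g (X k ω)| + |ρ * g (X (pb m k) ω)| := by
      rw [hD]; exact (abs_sub _ _)
    linarith
  have hDmF : ∀ (k l : ℕ), 2 ≤ k → k ≤ l + 1 → Measurable[F l] (D k) := by
    intro k l hk hkl
    have h1 : Measurable[F l] (X k) := hXF k (by omega) l hkl
    have h2 : Measurable[F l] (X (pb m k)) :=
      hXF _ (pb_one_le m k) l (by have := pb_lt m hk; omega)
    exact ((Measurable.of_discrete (f := g)).comp h1).sub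
      (measurable_const.mul ((Measurable.of_discrete (f := g)).comp h2))
  have hDm : ∀ k, 2 ≤ k → Measurable (D k) := fun k hk =>
    (hDmF k (k - 1) hk (by omega)).mono (F.le _) le_rfl
  have hDint : ∀ k, 2 ≤ k → Integrable (D k) μ := fun k hk => hint _ _ (hDm k hk) (hDb k)
  -- martingale property
  have mz : ∀ b : ℕ, 2 ≤ b → μ[D b | F (b - 2)] =ᵐ[μ] 0 := by
    intro b hb
    obtain ⟨k, rfl⟩ : ∃ k, b = k + 2 := ⟨b - 2, by omega⟩
    have hbk : k + 2 - 2 = k := by omega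
    rw [hbk]
    have hpaeq : pa (k + 2) = pb m (k + 2) := hpa' _ (by omega)
    have hmv : ∀ i, ∑ j, P i j * g j = ρ * g i := by
      intro i
      have h := congrFun hg i
      simpa [Matrix.mulVec, dotProduct, Pi.smul_apply, smul_eq_mul] using h
    have hXpbF : Measurable[F k] (X (pb m (k + 2))) :=
      hXF _ (pb_one_le _ _) k (by have := pb_lt m (show 2 ≤ k + 2 by omega); omega)
    have hgpb_meas : Measurable[F k] (fun ω => ρ * g (X (pb m (k + 2)) ω)) :=
      measurable_const.mul ((Measurable.of_discrete (f := g)).comp hXpbF)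
    have hgpb_bd : ∀ ω, |ρ * g (X (pb m (k + 2)) ω)| ≤ G := by
      intro ω
      rw [abs_mul]
      have := hG (X (pb m (k + 2)) ω)
      nlinarith [abs_nonneg ρ, abs_nonneg (g (X (pb m (k + 2)) ω))]
    have hgpb_int : Integrable (fun ω => ρ * g (X (pb m (k + 2)) ω)) μ :=
      hint _ G (hgpb_meas.mono (F.le k) le_rfl) hgpb_bd
    have hgb_int : Integrable (fun ω => g (X (k + 2) ω)) μ :=
      hint _ G ((Measurable.of_discrete (f := g)).comp (hXm (k + 2) (by omega))) (fun ω => hG _)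
    have hM' : μ[(fun ω => g (X (k + 2) ω)) | F k] =ᵐ[μ]
        fun ω => ρ * g (X (pb m (k + 2)) ω) := by
      refine (hMarkov k g).trans (Filter.EventuallyEq.of_eq ?_)
      funext ω
      rw [hpaeq, hmv]
    have hce : μ[(fun ω => ρ * g (X (pb m (k + 2)) ω)) | F k] =
        fun ω => ρ * g (X (pb m (k + 2)) ω) :=
      condExp_of_stronglyMeasurable (F.le k) hgpb_meas.stronglyMeasurable hgpb_int
    have hDeq : D (k + 2) = (fun ω => g (X (k + 2) ω)) - (fun ω => ρ * g (X (pb m (k + 2)) ω)) := rfl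
    rw [hDeq]
    refine (condExp_sub hgb_int hgpb_int (F k)).trans ?_
    refine (hM'.sub (Filter.EventuallyEq.of_eq hce)).trans ?_
    refine Filter.EventuallyEq.of_eq ?_
    funext ω
    simp
  -- orthogonality
  have ortho : ∀ a b : ℕ, 2 ≤ a → a < b → ∫ ω, D a ω * D b ω ∂μ = 0 := by
    intro a b ha hab
    have hb2 : 2 ≤ b := by omega
    have hDaF : Measurable[F (b - 2)] (D a) := hDmF a (b - 2) ha (by omega)
    have hintab : Integrable (fun ω => D a ω * D b ω) μ := by
      refine hint _ (2 * G * (2 * G)) ((hDm a ha).mul (hDm b hb2)) (fun ω => ?_)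
      rw [abs_mul]
      exact mul_le_mul (hDb _ _) (hDb _ _) (abs_nonneg _) (by positivity)
    have hpull : μ[D a * D b | F (b - 2)] =ᵐ[μ] D a * μ[D b | F (b - 2)] :=
      condExp_mul_of_stronglyMeasurable_left hDaF.stronglyMeasurable hintab (hDint b hb2)
    have h0 : μ[(fun ω => D a ω * D b ω) | F (b - 2)] =ᵐ[μ] 0 := by
      refine hpull.trans ?_
      filter_upwards [mz b hb2] with ω hω
      simp [hω]
    calc ∫ ω, D a ω * D b ω ∂μ
        = ∫ ω, (μ[(fun ω => D a ω * D b ω) | F (b - 2)]) ω ∂μ :=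
          (integral_condExp (F.le _)).symm
      _ = ∫ _ω, (0 : ℝ) ∂μ := integral_congr_ae h0
      _ = 0 := by simp
  -- representation along ancestor chain
  have rep : ∀ k : ℕ, 1 ≤ k → ∀ ω, g (X k ω) =
      ρ ^ (dep m k) * g (X 1 ω) + ∑ i ∈ range (dep m k), ρ ^ i * D ((pb m)^[i] k) ω := by
    intro k
    induction k using Nat.strong_induction_on with
    | _ k ih =>
      intro hk ω
      rcases le_or_gt k 1 with hk1 | hk1
      · have hkeq : k = 1 := by omega
        subst hkeq
        rw [dep_of_le_one le_rfl]
        simp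
      · have hk2 : 2 ≤ k := by omega
        have hrec := ih (pb m k) (pb_lt m hk2) (pb_one_le m k) ω
        have hdd := dep_succ (m := m) hk2
        have hDk : g (X k ω) = D k ω + ρ * g (X (pb m k) ω) := by
          rw [hD]; ring
        rw [hDk, hrec, hdd, Finset.sum_range_succ']
        have hre : ∀ i, (pb m)^[i + 1] k = (pb m)^[i] (pb m k) := fun i =>
          Function.iterate_succ_apply (pb m) i k
        have hsumeq : ∑ i ∈ range (dep m (pb m k)), ρ ^ (i + 1) * D ((pb m)^[i + 1] k) ω
            = ρ * ∑ i ∈ range (dep m (pb m k)), ρ ^ i * D ((pb m)^[i] (pb m k)) ω := by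
          rw [Finset.mul_sum]
          refine Finset.sum_congr rfl (fun i _ => ?_)
          rw [hre i, pow_succ]
          ring
        rw [hsumeq]
        simp only [Function.iterate_zero_apply, pow_zero, pow_succ]
        ring
  -- key quadratic bound for each n
  have key : ∀ n : ℕ, 1 ≤ n →
      ∫ ω, (∑ k ∈ Finset.Icc 1 n, g (X k ω)) ^ 2 ∂μ ≤
        2 * G^2 * (∑ s ∈ range (dep m n + 1), ((m:ℝ) * lam1)^s)^2
        + 8 * G^2 * ∑ s ∈ range (dep m n + 1), (m:ℝ)^s *
            (∑ i ∈ range (dep m n - s + 1), ((m:ℝ) * lam1)^i)^2 := by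
    intro n hn
    set A : ℝ := ∑ k ∈ Icc 1 n, ρ ^ (dep m k) with hAdef
    set W : ℕ → ℝ := fun a => ∑ i ∈ range (dep m n + 1), ∑ k ∈ Icc 1 n,
        (if (pb m)^[i] k = a ∧ i < dep m k then ρ^i else 0) with hWdef
    set M : Ω → ℝ := fun ω => ∑ a ∈ Icc 2 n, W a * D a ω with hMdef
    -- pointwise decomposition
    have inner : ∀ (ω : Ω) (k : ℕ), k ∈ Icc 1 n → ∀ i : ℕ,
        ∑ a ∈ Icc 2 n, (if (pb m)^[i] k = a ∧ i < dep m k then ρ^i else 0) * D a ω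
          = if i < dep m k then ρ^i * D ((pb m)^[i] k) ω else 0 := by
      intro ω k hk i
      obtain ⟨hk1, hkn⟩ := Finset.mem_Icc.mp hk
      by_cases hi : i < dep m k
      · simp only [hi, and_true]
        have hmem : (pb m)^[i] k ∈ Icc 2 n := by
          have h2 : dep m ((pb m)^[i] k) = dep m k - i := dep_iterate i k hi.le
          have h3 : ¬ ((pb m)^[i] k ≤ 1) := by
            intro hle
            have := dep_of_le_one (m := m) hle
            omega
          exact Finset.mem_Icc.mpr ⟨by omega, le_trans (pb_iterate_le i hk1) hkn⟩
        have hsplit : ∀ a, (if (pb m)^[i] k = a then ρ^i else 0) * D a ω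
            = if (pb m)^[i] k = a then ρ^i * D a ω else 0 := by
          intro a; split <;> simp
        rw [Finset.sum_congr rfl (fun a _ => hsplit a),
          Finset.sum_ite_eq (Icc 2 n) _ (fun a => ρ^i * D a ω), if_pos hmem]
        simp
      · simp [hi]
    have swap : ∀ (ω : Ω) (k : ℕ), k ∈ Icc 1 n →
        ∑ i ∈ range (dep m k), ρ^i * D ((pb m)^[i] k) ω
          = ∑ i ∈ range (dep m n + 1), ∑ a ∈ Icc 2 n,
              (if (pb m)^[i] k = a ∧ i < dep m k then ρ^i else 0) * D a ω := by
      intro ω k hk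
      have hdkT : dep m k ≤ dep m n := dep_mono m (Finset.mem_Icc.mp hk).2
      calc ∑ i ∈ range (dep m k), ρ^i * D ((pb m)^[i] k) ω
          = ∑ i ∈ range (dep m k), (if i < dep m k then ρ^i * D ((pb m)^[i] k) ω else 0) :=
            Finset.sum_congr rfl (fun i hi => by rw [if_pos (Finset.mem_range.mp hi)])
        _ = ∑ i ∈ range (dep m n + 1), (if i < dep m k then ρ^i * D ((pb m)^[i] k) ω else 0) :=
            Finset.sum_subset (by intro i hi; simp only [Finset.mem_range] at *; omega)
              (fun i _ hi => by rw [if_neg (by simp only [Finset.mem_range] at hi; omega)])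
        _ = _ := Finset.sum_congr rfl (fun i _ => (inner ω k hk i).symm)
    have step1 : ∀ ω, ∑ k ∈ Icc 1 n, g (X k ω) = A * g (X 1 ω) + M ω := by
      intro ω
      have e1 : ∑ k ∈ Icc 1 n, g (X k ω)
          = ∑ k ∈ Icc 1 n, (ρ ^ (dep m k) * g (X 1 ω)
              + ∑ i ∈ range (dep m k), ρ^i * D ((pb m)^[i] k) ω) :=
        Finset.sum_congr rfl (fun k hk => rep k (Finset.mem_Icc.mp hk).1 ω)
      rw [e1, Finset.sum_add_distrib, ← Finset.sum_mul]
      congr 1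
      calc ∑ k ∈ Icc 1 n, ∑ i ∈ range (dep m k), ρ^i * D ((pb m)^[i] k) ω
          = ∑ k ∈ Icc 1 n, ∑ i ∈ range (dep m n + 1), ∑ a ∈ Icc 2 n,
              (if (pb m)^[i] k = a ∧ i < dep m k then ρ^i else 0) * D a ω :=
            Finset.sum_congr rfl (fun k hk => swap ω k hk)
        _ = ∑ i ∈ range (dep m n + 1), ∑ k ∈ Icc 1 n, ∑ a ∈ Icc 2 n,
              (if (pb m)^[i] k = a ∧ i < dep m k then ρ^i else 0) * D a ω := Finset.sum_comm
        _ = ∑ i ∈ range (dep m n + 1), ∑ a ∈ Icc 2 n, ∑ k ∈ Icc 1 n,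
              (if (pb m)^[i] k = a ∧ i < dep m k then ρ^i else 0) * D a ω :=
            Finset.sum_congr rfl (fun i _ => Finset.sum_comm)
        _ = ∑ a ∈ Icc 2 n, ∑ i ∈ range (dep m n + 1), ∑ k ∈ Icc 1 n,
              (if (pb m)^[i] k = a ∧ i < dep m k then ρ^i else 0) * D a ω := Finset.sum_comm
        _ = M ω := by
            rw [hMdef]
            refine Finset.sum_congr rfl (fun a _ => ?_)
            rw [hWdef, Finset.sum_mul]
            refine Finset.sum_congr rfl (fun i _ => ?_)
            rw [Finset.sum_mul]
    -- integrability and measurability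
    have sqb : ∀ (x b : ℝ), |x| ≤ b → x^2 ≤ b^2 := by
      intro x b h
      nlinarith [abs_nonneg x, sq_abs x]
    have hMmeas : Measurable M := by
      rw [hMdef]
      refine Finset.measurable_sum _ (fun a ha => ?_)
      exact measurable_const.mul (hDm a (Finset.mem_Icc.mp ha).1)
    have hMbd : ∀ ω, |M ω| ≤ ∑ a ∈ Icc 2 n, |W a| * (2*G) := by
      intro ω
      rw [hMdef]
      refine (Finset.abs_sum_le_sum_abs _ _).trans (Finset.sum_le_sum fun a _ => ?_)
      rw [abs_mul]
      exact mul_le_mul_of_nonneg_left (hDb a ω) (abs_nonneg _)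
    have hgX1meas : Measurable (fun ω => g (X 1 ω)) :=
      (Measurable.of_discrete (f := g)).comp (hXm 1 le_rfl)
    have hSmeas : Measurable (fun ω => ∑ k ∈ Icc 1 n, g (X k ω)) := by
      refine Finset.measurable_sum _ (fun k hk => ?_)
      exact (Measurable.of_discrete (f := g)).comp (hXm k (Finset.mem_Icc.mp hk).1)
    have hSbd : ∀ ω, |∑ k ∈ Icc 1 n, g (X k ω)| ≤ ∑ k ∈ Icc 1 n, G := fun ω =>
      (Finset.abs_sum_le_sum_abs _ _).trans (Finset.sum_le_sum fun k _ => hG _)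
    have hS2int : Integrable (fun ω => (∑ k ∈ Icc 1 n, g (X k ω))^2) μ := by
      refine hint _ ((∑ k ∈ Icc 1 n, G)^2) (hSmeas.pow_const 2) (fun ω => ?_)
      rw [abs_of_nonneg (sq_nonneg _)]
      exact sqb _ _ (hSbd ω)
    have hgX1sq_int : Integrable (fun ω => (g (X 1 ω))^2) μ := by
      refine hint _ (G^2) (hgX1meas.pow_const 2) (fun ω => ?_)
      rw [abs_of_nonneg (sq_nonneg _)]
      exact sqb _ _ (hG _)
    have hM2int : Integrable (fun ω => (M ω)^2) μ := by
      refine hint _ ((∑ a ∈ Icc 2 n, |W a| * (2*G))^2) (hMmeas.pow_const 2) (fun ω => ?_)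
      rw [abs_of_nonneg (sq_nonneg _)]
      exact sqb _ _ (hMbd ω)
    have hRHSint : Integrable (fun ω => (2*A^2) * (g (X 1 ω))^2 + 2 * (M ω)^2) μ :=
      (hgX1sq_int.const_mul _).add (hM2int.const_mul _)
    -- main integral inequality step
    have hmono : ∫ ω, (∑ k ∈ Icc 1 n, g (X k ω))^2 ∂μ
        ≤ ∫ ω, ((2*A^2) * (g (X 1 ω))^2 + 2 * (M ω)^2) ∂μ := by
      refine integral_mono hS2int hRHSint (fun ω => ?_)
      rw [step1 ω]
      nlinarith [sq_nonneg (A * g (X 1 ω) - M ω), sq_nonneg (g (X 1 ω)), sq_nonneg A]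
    have hsplitint : ∫ ω, ((2*A^2) * (g (X 1 ω))^2 + 2 * (M ω)^2) ∂μ
        = (2*A^2) * ∫ ω, (g (X 1 ω))^2 ∂μ + 2 * ∫ ω, (M ω)^2 ∂μ := by
      rw [integral_add (hgX1sq_int.const_mul _) (hM2int.const_mul _),
        integral_const_mul, integral_const_mul]
    have hgX1sq_le : ∫ ω, (g (X 1 ω))^2 ∂μ ≤ G^2 := by
      calc ∫ ω, (g (X 1 ω))^2 ∂μ ≤ ∫ _ω, G^2 ∂μ :=
            integral_mono hgX1sq_int (integrable_const _) (fun ω => sqb _ _ (hG _))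
        _ = G^2 := by simp
    -- second moment of the martingale part
    have hM2 : ∫ ω, (M ω)^2 ∂μ ≤ ∑ a ∈ Icc 2 n, (W a)^2 * (4*G^2) := by
      have hprodint : ∀ a ∈ Icc 2 n, ∀ b ∈ Icc 2 n,
          Integrable (fun ω => (W a * D a ω) * (W b * D b ω)) μ := by
        intro a ha b hb
        refine hint _ ((|W a| * (2*G)) * (|W b| * (2*G)))
          ((measurable_const.mul (hDm a (Finset.mem_Icc.mp ha).1)).mul
            (measurable_const.mul (hDm b (Finset.mem_Icc.mp hb).1))) (fun ω => ?_)
        rw [abs_mul, abs_mul, abs_mul]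
        refine mul_le_mul ?_ ?_ (by positivity) (by positivity)
        · exact mul_le_mul_of_nonneg_left (hDb a ω) (abs_nonneg _)
        · exact mul_le_mul_of_nonneg_left (hDb b ω) (abs_nonneg _)
      have hexp : ∫ ω, (M ω)^2 ∂μ
          = ∑ a ∈ Icc 2 n, ∑ b ∈ Icc 2 n, ∫ ω, (W a * D a ω) * (W b * D b ω) ∂μ := by
        have e : (fun ω => (M ω)^2)
            = fun ω => ∑ a ∈ Icc 2 n, ∑ b ∈ Icc 2 n, (W a * D a ω) * (W b * D b ω) := by
          funext ω
          rw [hMdef, sq, Finset.sum_mul_sum]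
        rw [e, integral_finset_sum _ (fun a ha =>
          integrable_finset_sum _ (fun b hb => hprodint a ha b hb))]
        exact Finset.sum_congr rfl (fun a ha =>
          integral_finset_sum _ (fun b hb => hprodint a ha b hb))
      have hre : ∀ a ∈ Icc 2 n, ∀ b ∈ Icc 2 n,
          ∫ ω, (W a * D a ω) * (W b * D b ω) ∂μ
            = (W a * W b) * ∫ ω, D a ω * D b ω ∂μ := by
        intro a _ b _
        rw [← integral_const_mul]
        congr 1
        funext ω
        ring
      have hdiag : ∀ a ∈ Icc 2 n,
          ∑ b ∈ Icc 2 n, (W a * W b) * ∫ ω, D a ω * D b ω ∂μ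
            = (W a)^2 * ∫ ω, (D a ω)^2 ∂μ := by
        intro a ha
        have ha2 : 2 ≤ a := (Finset.mem_Icc.mp ha).1
        rw [Finset.sum_eq_single_of_mem a ha]
        · have e2 : ∫ ω, D a ω * D a ω ∂μ = ∫ ω, (D a ω)^2 ∂μ := by
            congr 1
            funext ω
            rw [sq]
          rw [e2, ← sq]
        · intro b hb hba
          have hb2 : 2 ≤ b := (Finset.mem_Icc.mp hb).1
          rcases lt_or_gt_of_ne hba with h | h
          · have : (fun ω => D a ω * D b ω) = fun ω => D b ω * D a ω :=
              funext fun ω => mul_comm _ _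
            rw [show (∫ ω, D a ω * D b ω ∂μ) = ∫ ω, D b ω * D a ω ∂μ from by rw [this]]
            rw [ortho b a hb2 h, mul_zero]
          · rw [ortho a b ha2 h, mul_zero]
      have hDsq_le : ∀ a ∈ Icc 2 n, ∫ ω, (D a ω)^2 ∂μ ≤ 4*G^2 := by
        intro a ha
        have := (Finset.mem_Icc.mp ha).1
        calc ∫ ω, (D a ω)^2 ∂μ ≤ ∫ _ω, (2*G)^2 ∂μ := by
              refine integral_mono ?_ (integrable_const _) (fun ω => sqb _ _ (hDb a ω))
              refine hint _ ((2*G)^2) ((hDm a this).pow_const 2) (fun ω => ?_)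
              rw [abs_of_nonneg (sq_nonneg _)]
              exact sqb _ _ (hDb a ω)
          _ = (2*G)^2 := by simp
          _ = 4*G^2 := by ring
      calc ∫ ω, (M ω)^2 ∂μ
          = ∑ a ∈ Icc 2 n, ∑ b ∈ Icc 2 n, ∫ ω, (W a * D a ω) * (W b * D b ω) ∂μ := hexp
        _ = ∑ a ∈ Icc 2 n, (W a)^2 * ∫ ω, (D a ω)^2 ∂μ := by
            refine Finset.sum_congr rfl (fun a ha => ?_)
            rw [Finset.sum_congr rfl (fun b hb => hre a ha b hb), hdiag a ha]
        _ ≤ ∑ a ∈ Icc 2 n, (W a)^2 * (4*G^2) :=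
            Finset.sum_le_sum (fun a ha =>
              mul_le_mul_of_nonneg_left (hDsq_le a ha) (sq_nonneg _))
    -- deterministic bounds
    have hAbs : |A| ≤ ∑ s ∈ range (dep m n + 1), ((m:ℝ)*lam1)^s := by
      have h1 : |A| ≤ ∑ k ∈ Icc 1 n, lam1 ^ (dep m k) := by
        rw [hAdef]
        refine (Finset.abs_sum_le_sum_abs _ _).trans (Finset.sum_le_sum fun k _ => ?_)
        rw [abs_pow]
        exact pow_le_pow_left₀ (abs_nonneg ρ) hρ _
      refine h1.trans ?_
      have h2 : ∑ k ∈ Icc 1 n, lam1 ^ (dep m k)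
          = ∑ t ∈ range (dep m n + 1), ∑ k ∈ (Icc 1 n).filter (fun k => dep m k = t),
              lam1 ^ (dep m k) :=
        (Finset.sum_fiberwise_of_maps_to (fun k hk => Finset.mem_range.mpr (by
            have := dep_mono m (Finset.mem_Icc.mp hk).2; omega)) _).symm
      rw [h2]
      refine Finset.sum_le_sum fun t _ => ?_
      have h3 : ∑ k ∈ (Icc 1 n).filter (fun k => dep m k = t), lam1 ^ (dep m k)
          = (((Icc 1 n).filter (fun k => dep m k = t)).card : ℝ) * lam1 ^ t := by
        rw [Finset.sum_congr rfl (fun k hk => by rw [(Finset.mem_filter.mp hk).2]),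
          Finset.sum_const, nsmul_eq_mul]
      rw [h3, mul_pow]
      refine mul_le_mul_of_nonneg_right ?_ (pow_nonneg hl0 t)
      calc (((Icc 1 n).filter (fun k => dep m k = t)).card : ℝ)
          ≤ ((m ^ t : ℕ) : ℝ) := Nat.cast_le.mpr (card_dep_le hm n t)
        _ = (m:ℝ)^t := by push_cast; ring
    have hWbd : ∀ a ∈ Icc 2 n, |W a| ≤ ∑ i ∈ range (dep m n - dep m a + 1), ((m:ℝ)*lam1)^i := by
      intro a ha
      have h1 : |W a| ≤ ∑ i ∈ range (dep m n + 1),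
          ((((Icc 1 n).filter (fun k => (pb m)^[i] k = a ∧ i < dep m k)).card : ℝ) * lam1 ^ i) := by
        rw [hWdef]
        refine (Finset.abs_sum_le_sum_abs _ _).trans (Finset.sum_le_sum fun i _ => ?_)
        refine (Finset.abs_sum_le_sum_abs _ _).trans ?_
        have habs : ∀ k ∈ Icc 1 n, |if (pb m)^[i] k = a ∧ i < dep m k then ρ^i else 0|
            ≤ if (pb m)^[i] k = a ∧ i < dep m k then lam1^i else 0 := by
          intro k _
          split
          · rw [abs_pow]; exact pow_le_pow_left₀ (abs_nonneg ρ) hρ i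
          · simp
        refine (Finset.sum_le_sum habs).trans ?_
        rw [← Finset.sum_filter, Finset.sum_const, nsmul_eq_mul]
      refine h1.trans ?_
      have hvan : ∀ i, dep m n - dep m a + 1 ≤ i →
          ((Icc 1 n).filter (fun k => (pb m)^[i] k = a ∧ i < dep m k)).card = 0 := by
        intro i hi
        rw [Finset.card_eq_zero, Finset.filter_eq_empty_iff]
        intro k hk
        obtain ⟨hk1, hkn⟩ := Finset.mem_Icc.mp hk
        rintro ⟨hpbk, hidep⟩
        have h2 : dep m ((pb m)^[i] k) = dep m k - i := dep_iterate i k hidep.le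
        rw [hpbk] at h2
        have h3 : dep m k ≤ dep m n := dep_mono m hkn
        omega
      have hsub : range (dep m n - dep m a + 1) ⊆ range (dep m n + 1) := by
        intro i hi; simp only [Finset.mem_range] at *; omega
      have heq : ∑ i ∈ range (dep m n + 1),
            ((((Icc 1 n).filter (fun k => (pb m)^[i] k = a ∧ i < dep m k)).card : ℝ) * lam1 ^ i)
          = ∑ i ∈ range (dep m n - dep m a + 1),
            ((((Icc 1 n).filter (fun k => (pb m)^[i] k = a ∧ i < dep m k)).card : ℝ) * lam1 ^ i) :=
        (Finset.sum_subset hsub (fun i _ hi => by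
          rw [hvan i (by simpa [Finset.mem_range, not_lt] using hi)]
          simp)).symm
      rw [heq]
      refine Finset.sum_le_sum fun i _ => ?_
      rw [mul_pow]
      refine mul_le_mul_of_nonneg_right ?_ (pow_nonneg hl0 i)
      calc ((((Icc 1 n).filter (fun k => (pb m)^[i] k = a ∧ i < dep m k)).card : ℝ))
          ≤ ((m^i : ℕ) : ℝ) := by
            refine Nat.cast_le.mpr (le_trans (Finset.card_le_card ?_) (card_iterate_fiber hm n a i))
            intro k hk
            simp only [Finset.mem_filter] at *
            exact ⟨hk.1, hk.2.1, hk.2.2.le⟩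
        _ = (m:ℝ)^i := by push_cast; ring
    have hWsum : ∑ a ∈ Icc 2 n, (W a)^2
        ≤ ∑ s ∈ range (dep m n + 1), (m:ℝ)^s *
            (∑ i ∈ range (dep m n - s + 1), ((m:ℝ)*lam1)^i)^2 := by
      have h1 : ∑ a ∈ Icc 2 n, (W a)^2
          ≤ ∑ a ∈ Icc 2 n, (∑ i ∈ range (dep m n - dep m a + 1), ((m:ℝ)*lam1)^i)^2 :=
        Finset.sum_le_sum fun a ha => by
          rw [← sq_abs (W a)]
          exact pow_le_pow_left₀ (abs_nonneg _) (hWbd a ha) 2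
      have h2 : ∑ a ∈ Icc 2 n, (∑ i ∈ range (dep m n - dep m a + 1), ((m:ℝ)*lam1)^i)^2
          ≤ ∑ a ∈ Icc 1 n, (∑ i ∈ range (dep m n - dep m a + 1), ((m:ℝ)*lam1)^i)^2 :=
        Finset.sum_le_sum_of_subset_of_nonneg
          (by intro a ha; simp only [Finset.mem_Icc] at *; omega)
          (fun a _ _ => sq_nonneg _)
      have h3 : ∑ a ∈ Icc 1 n, (∑ i ∈ range (dep m n - dep m a + 1), ((m:ℝ)*lam1)^i)^2
          = ∑ s ∈ range (dep m n + 1), ∑ a ∈ (Icc 1 n).filter (fun a => dep m a = s),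
              (∑ i ∈ range (dep m n - dep m a + 1), ((m:ℝ)*lam1)^i)^2 :=
        (Finset.sum_fiberwise_of_maps_to (fun a ha => Finset.mem_range.mpr (by
          have := dep_mono m (Finset.mem_Icc.mp ha).2; omega)) _).symm
      have h4 : ∀ s ∈ range (dep m n + 1),
          ∑ a ∈ (Icc 1 n).filter (fun a => dep m a = s),
              (∑ i ∈ range (dep m n - dep m a + 1), ((m:ℝ)*lam1)^i)^2
            ≤ (m:ℝ)^s * (∑ i ∈ range (dep m n - s + 1), ((m:ℝ)*lam1)^i)^2 := by
        intro s _
        have h5 : ∑ a ∈ (Icc 1 n).filter (fun a => dep m a = s),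
              (∑ i ∈ range (dep m n - dep m a + 1), ((m:ℝ)*lam1)^i)^2
            = (((Icc 1 n).filter (fun a => dep m a = s)).card : ℝ)
                * (∑ i ∈ range (dep m n - s + 1), ((m:ℝ)*lam1)^i)^2 := by
          rw [Finset.sum_congr rfl (fun a ha => by rw [(Finset.mem_filter.mp ha).2]),
            Finset.sum_const, nsmul_eq_mul]
        rw [h5]
        refine mul_le_mul_of_nonneg_right ?_ (sq_nonneg _)
        calc (((Icc 1 n).filter (fun a => dep m a = s)).card : ℝ)
            ≤ ((m ^ s : ℕ) : ℝ) := Nat.cast_le.mpr (card_dep_le hm n s)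
          _ = (m:ℝ)^s := by push_cast; ring
      calc ∑ a ∈ Icc 2 n, (W a)^2
          ≤ ∑ a ∈ Icc 1 n, (∑ i ∈ range (dep m n - dep m a + 1), ((m:ℝ)*lam1)^i)^2 :=
            h1.trans h2
        _ = _ := h3
        _ ≤ _ := Finset.sum_le_sum h4
    -- assemble
    have hA2 : A^2 ≤ (∑ s ∈ range (dep m n + 1), ((m:ℝ)*lam1)^s)^2 := by
      rw [← sq_abs A]
      exact pow_le_pow_left₀ (abs_nonneg _) hAbs 2
    have hMfinal : ∫ ω, (M ω)^2 ∂μ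
        ≤ 4*G^2 * ∑ s ∈ range (dep m n + 1), (m:ℝ)^s *
            (∑ i ∈ range (dep m n - s + 1), ((m:ℝ)*lam1)^i)^2 := by
      refine hM2.trans ?_
      have : ∑ a ∈ Icc 2 n, (W a)^2 * (4*G^2) = (∑ a ∈ Icc 2 n, (W a)^2) * (4*G^2) := by
        rw [Finset.sum_mul]
      rw [this]
      calc (∑ a ∈ Icc 2 n, (W a)^2) * (4*G^2)
          ≤ (∑ s ∈ range (dep m n + 1), (m:ℝ)^s *
              (∑ i ∈ range (dep m n - s + 1), ((m:ℝ)*lam1)^i)^2) * (4*G^2) := by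
            refine mul_le_mul_of_nonneg_right hWsum (by positivity)
        _ = _ := by ring
    have hgX1true : (2*A^2) * ∫ ω, (g (X 1 ω))^2 ∂μ ≤ 2*A^2*G^2 :=
      mul_le_mul_of_nonneg_left hgX1sq_le (by positivity)
    calc ∫ ω, (∑ k ∈ Finset.Icc 1 n, g (X k ω))^2 ∂μ
        ≤ (2*A^2) * ∫ ω, (g (X 1 ω))^2 ∂μ + 2 * ∫ ω, (M ω)^2 ∂μ := by
          rw [← hsplitint]; exact hmono
      _ ≤ 2*A^2*G^2 + 2 * (4*G^2 * ∑ s ∈ range (dep m n + 1), (m:ℝ)^s *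
            (∑ i ∈ range (dep m n - s + 1), ((m:ℝ)*lam1)^i)^2) := by
          refine add_le_add hgX1true ?_
          exact mul_le_mul_of_nonneg_left hMfinal (by norm_num)
      _ ≤ 2 * G^2 * (∑ s ∈ range (dep m n + 1), ((m:ℝ) * lam1)^s)^2
          + 8 * G^2 * ∑ s ∈ range (dep m n + 1), (m:ℝ)^s *
              (∑ i ∈ range (dep m n - s + 1), ((m:ℝ) * lam1)^i)^2 := by
          have h6 : A^2 * G^2 ≤ (∑ s ∈ range (dep m n + 1), ((m:ℝ) * lam1)^s)^2 * G^2 :=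
            mul_le_mul_of_nonneg_right hA2 (by positivity)
          linarith
  -- final analysis
  have hf0 : ∀ n : ℕ, 0 ≤ ∫ ω, ((n : ℝ)⁻¹ * ∑ k ∈ Finset.Icc 1 n, g (X k ω)) ^ 2 ∂μ :=
    fun n => integral_nonneg (fun ω => sq_nonneg _)
  have hfeq : ∀ n : ℕ, ∫ ω, ((n : ℝ)⁻¹ * ∑ k ∈ Finset.Icc 1 n, g (X k ω)) ^ 2 ∂μ
      = ((n:ℝ)⁻¹)^2 * ∫ ω, (∑ k ∈ Finset.Icc 1 n, g (X k ω)) ^ 2 ∂μ := by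
    intro n
    rw [← integral_const_mul]
    congr 1
    funext ω
    ring
  have hkey_nonneg : ∀ n : ℕ, 0 ≤ ∫ ω, (∑ k ∈ Finset.Icc 1 n, g (X k ω)) ^ 2 ∂μ :=
    fun n => integral_nonneg (fun ω => sq_nonneg _)
  by_cases hc : (m:ℝ) * lam1 < 1
  · -- subcritical case : bound by C / n
    have hc0 : (0:ℝ) ≤ (m:ℝ) * lam1 := by positivity
    set K : ℝ := (1 - (m:ℝ)*lam1)⁻¹ with hKdef
    have hK0 : 0 ≤ K := by
      rw [hKdef]
      have : (0:ℝ) < 1 - (m:ℝ)*lam1 := by linarith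
      positivity
    have hgeom : ∀ q : ℕ, ∑ i ∈ range q, ((m:ℝ)*lam1)^i ≤ K := by
      intro q
      have hsummable : Summable (fun i : ℕ => ((m:ℝ)*lam1)^i) :=
        summable_geometric_of_lt_one hc0 hc
      have h := Summable.sum_le_tsum (range q) (fun i _ => pow_nonneg hc0 i) hsummable
      rwa [tsum_geometric_of_lt_one hc0 hc] at h
    have hgeomZ : ∀ q : ℕ, (0:ℝ) ≤ ∑ i ∈ range q, ((m:ℝ)*lam1)^i :=
      fun q => Finset.sum_nonneg (fun i _ => pow_nonneg hc0 i)
    set C : ℝ := 2*G^2*K^2 + 16*G^2*K^2*(m:ℝ) with hCdef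
    have hCb : ∀ n : ℕ, 1 ≤ n →
        ∫ ω, ((n : ℝ)⁻¹ * ∑ k ∈ Finset.Icc 1 n, g (X k ω)) ^ 2 ∂μ ≤ C / n := by
      intro n hn
      have hn0 : (0:ℝ) < n := by exact_mod_cast hn
      have hn1 : (1:ℝ) ≤ n := by exact_mod_cast hn
      have hterm1 : (∑ s ∈ range (dep m n + 1), ((m:ℝ)*lam1)^s)^2 ≤ K^2 := by
        rw [← sq_abs]
        refine pow_le_pow_left₀ (abs_nonneg _) ?_ 2
        rw [abs_of_nonneg (hgeomZ _)]
        exact hgeom _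
      have hterm2 : ∑ s ∈ range (dep m n + 1), (m:ℝ)^s *
            (∑ i ∈ range (dep m n - s + 1), ((m:ℝ)*lam1)^i)^2
          ≤ K^2 * (2*(m:ℝ)*n) := by
        have h1 : ∑ s ∈ range (dep m n + 1), (m:ℝ)^s *
              (∑ i ∈ range (dep m n - s + 1), ((m:ℝ)*lam1)^i)^2
            ≤ ∑ s ∈ range (dep m n + 1), (m:ℝ)^s * K^2 := by
          refine Finset.sum_le_sum (fun s _ => ?_)
          refine mul_le_mul_of_nonneg_left ?_ (by positivity)
          rw [← sq_abs]
          refine pow_le_pow_left₀ (abs_nonneg _) ?_ 2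
          rw [abs_of_nonneg (hgeomZ _)]
          exact hgeom _
        refine h1.trans ?_
        rw [← Finset.sum_mul]
        have h2 : ∑ s ∈ range (dep m n + 1), (m:ℝ)^s ≤ 2*(m:ℝ)*n := by
          have h3 := geom_dep_le hm (show 1 ≤ n from hn)
          calc ∑ s ∈ range (dep m n + 1), (m:ℝ)^s
              = ((∑ s ∈ range (dep m n + 1), m^s : ℕ) : ℝ) := by push_cast; ring
            _ ≤ ((2*m*n : ℕ) : ℝ) := Nat.cast_le.mpr h3
            _ = 2*(m:ℝ)*n := by push_cast; ring
        calc (∑ s ∈ range (dep m n + 1), (m:ℝ)^s) * K^2 ≤ (2*(m:ℝ)*n) * K^2 :=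
              mul_le_mul_of_nonneg_right h2 (by positivity)
          _ = K^2 * (2*(m:ℝ)*n) := by ring
      have hS2b : ∫ ω, (∑ k ∈ Finset.Icc 1 n, g (X k ω)) ^ 2 ∂μ
          ≤ 2*G^2*K^2 + 16*G^2*K^2*(m:ℝ)*n := by
        refine (key n hn).trans ?_
        have e1 : 2 * G^2 * (∑ s ∈ range (dep m n + 1), ((m:ℝ) * lam1)^s)^2
            ≤ 2*G^2*K^2 := by nlinarith [sq_nonneg G, hterm1]
        have e2 : 8 * G^2 * (∑ s ∈ range (dep m n + 1), (m:ℝ)^s *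
              (∑ i ∈ range (dep m n - s + 1), ((m:ℝ) * lam1)^i)^2)
            ≤ 8*G^2*(K^2 * (2*(m:ℝ)*n)) := by nlinarith [sq_nonneg G, hterm2]
        nlinarith [e1, e2]
      rw [hfeq n]
      have hfinal : ((n:ℝ)⁻¹)^2 * (2*G^2*K^2 + 16*G^2*K^2*(m:ℝ)*n) ≤ C / n := by
        have e : ((n:ℝ)⁻¹)^2 * (2*G^2*K^2 + 16*G^2*K^2*(m:ℝ)*n)
            = (2*G^2*K^2)/(n:ℝ)^2 + (16*G^2*K^2*(m:ℝ))/n := by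
          field_simp
        rw [e, hCdef]
        have h1 : (2*G^2*K^2)/(n:ℝ)^2 ≤ (2*G^2*K^2)/n :=
          div_le_div_of_nonneg_left (by positivity) hn0 (by nlinarith)
        have h2 : (2*G^2*K^2 + 16*G^2*K^2*(m:ℝ))/(n:ℝ)
            = (2*G^2*K^2)/(n:ℝ) + (16*G^2*K^2*(m:ℝ))/n := by
          rw [add_div]
        rw [h2]
        linarith
      calc ((n:ℝ)⁻¹)^2 * ∫ ω, (∑ k ∈ Finset.Icc 1 n, g (X k ω)) ^ 2 ∂μ
          ≤ ((n:ℝ)⁻¹)^2 * (2*G^2*K^2 + 16*G^2*K^2*(m:ℝ)*n) :=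
            mul_le_mul_of_nonneg_left hS2b (by positivity)
        _ ≤ C / n := hfinal
    refine tendsto_of_tendsto_of_tendsto_of_le_of_le' tendsto_const_nhds
      (tendsto_const_div_atTop_nhds_zero_nat C) (Filter.Eventually.of_forall hf0) ?_
    filter_upwards [Filter.eventually_ge_atTop 1] with n hn using hCb n hn
  · -- supercritical case
    have hc1 : (1:ℝ) ≤ (m:ℝ) * lam1 := not_lt.mp hc
    have hlam1pos : 0 < lam1 := by
      rcases eq_or_lt_of_le hl0 with h | h
      · exfalso
        rw [← h] at hc1
        simp at hc1
        linarith
      · exact h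
    have hm1R : 1 < (m:ℝ) := by
      by_contra h
      push_neg at h
      nlinarith
    have hm0R : (0:ℝ) < m := by linarith
    set φ : ℕ → ℝ := fun T => 10*G^2*(m:ℝ)^2*((T:ℝ)+1)^3 * ((lam1^2)^T + ((m:ℝ)⁻¹)^T)
      with hφdef
    have hφ : Tendsto φ atTop (nhds 0) := by
      have p1 := polygeom (r := lam1^2) (by positivity) (by nlinarith)
      have p2 := polygeom (r := (m:ℝ)⁻¹) (by positivity) ((inv_lt_one_iff₀.mpr (Or.inr hm1R)))
      have h := (p1.add p2).const_mul (10*G^2*(m:ℝ)^2)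
      rw [add_zero, mul_zero] at h
      refine h.congr (fun T => ?_)
      rw [hφdef]
      ring
    have hbound : ∀ n : ℕ, 2 ≤ n →
        ∫ ω, ((n : ℝ)⁻¹ * ∑ k ∈ Finset.Icc 1 n, g (X k ω)) ^ 2 ∂μ ≤ φ (dep m n) := by
      intro n hn2
      have hn : 1 ≤ n := by omega
      have hT1 : 1 ≤ dep m n := by
        by_contra h
        push_neg at h
        have h0 : dep m n = 0 := by omega
        rw [dep_eq_zero_iff] at h0
        omega
      obtain ⟨T, hTdef⟩ : ∃ T, dep m n = T := ⟨_, rfl⟩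
      rw [hTdef] at hT1
      have hkey := key n hn
      rw [hTdef] at hkey
      have hn0 : (0:ℝ) < n := by exact_mod_cast (show 0 < n by omega)
      -- n is at least m^(T-1)
      have hnm : ((m:ℝ))^(T-1) ≤ (n:ℝ) := by
        have h := pow_pred_dep_lt hm (show 1 ≤ n from hn) (hTdef ▸ hT1)
        rw [hTdef] at h
        calc ((m:ℝ))^(T-1) = ((m^(T-1) : ℕ) : ℝ) := by push_cast; ring
          _ ≤ (n:ℝ) := by exact_mod_cast h.le
      have hninv : (n:ℝ)⁻¹ ≤ (m:ℝ) * ((m:ℝ)⁻¹)^T := by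
        have hmp : (0:ℝ) < (m:ℝ)^(T-1) := by positivity
        have h1 : (n:ℝ)⁻¹ ≤ ((m:ℝ)^(T-1))⁻¹ := by
          exact inv_anti₀ hmp hnm
        refine h1.trans ?_
        have hTT : T - 1 + 1 = T := by omega
        have h2 : (m:ℝ)^T = (m:ℝ)^(T-1) * m := by
          rw [← pow_succ, hTT]
        have hne : (m:ℝ) ≠ 0 := ne_of_gt hm0R
        have h3 : (m:ℝ) * ((m:ℝ)^(T-1) * (m:ℝ))⁻¹ = ((m:ℝ)^(T-1))⁻¹ := by
          field_simp
        rw [inv_pow, h2, h3]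
      -- sum estimates
      have hmlam0 : (0:ℝ) ≤ (m:ℝ)*lam1 := by positivity
      have est1 : ∑ s ∈ range (T+1), ((m:ℝ)*lam1)^s ≤ ((T:ℝ)+1) * ((m:ℝ)*lam1)^T := by
        have h := Finset.sum_le_card_nsmul (range (T+1)) (fun s => ((m:ℝ)*lam1)^s)
          (((m:ℝ)*lam1)^T)
          (fun s hs => pow_le_pow_right₀ hc1 (Nat.lt_succ_iff.mp (Finset.mem_range.mp hs)))
        rw [Finset.card_range, nsmul_eq_mul] at h
        refine h.trans (le_of_eq ?_)
        push_cast
        ring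
      have est2 : ∀ s ∈ range (T+1), (m:ℝ)^s * (∑ i ∈ range (T - s + 1), ((m:ℝ)*lam1)^i)^2
          ≤ ((T:ℝ)+1)^2 * ((m:ℝ)^T + (((m:ℝ)*lam1)^T)^2) := by
        intro s hs
        have hsT : s ≤ T := Nat.lt_succ_iff.mp (Finset.mem_range.mp hs)
        have hsd : s + (T - s) = T := by omega
        have hb1 : ∑ i ∈ range ((T-s) + 1), ((m:ℝ)*lam1)^i
            ≤ ((T:ℝ)+1) * ((m:ℝ)*lam1)^(T-s) := by
          have h := Finset.sum_le_card_nsmul (range ((T-s)+1)) (fun i => ((m:ℝ)*lam1)^i)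
            (((m:ℝ)*lam1)^(T-s))
            (fun i hi => pow_le_pow_right₀ hc1 (Nat.lt_succ_iff.mp (Finset.mem_range.mp hi)))
          rw [Finset.card_range, nsmul_eq_mul] at h
          refine h.trans ?_
          have hd1 : ((T-s : ℕ):ℝ) + 1 ≤ (T:ℝ)+1 := by
            have : ((T-s : ℕ):ℝ) ≤ (T:ℝ) := Nat.cast_le.mpr (by omega)
            linarith
          have := mul_le_mul_of_nonneg_right hd1 (pow_nonneg hmlam0 (T-s))
          calc ((T-s+1 : ℕ):ℝ) * ((m:ℝ)*lam1)^(T-s)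
              = (((T-s:ℕ):ℝ)+1) * ((m:ℝ)*lam1)^(T-s) := by push_cast; ring
            _ ≤ ((T:ℝ)+1) * ((m:ℝ)*lam1)^(T-s) := this
        have hb2 : (∑ i ∈ range ((T-s) + 1), ((m:ℝ)*lam1)^i)^2
            ≤ (((T:ℝ)+1) * ((m:ℝ)*lam1)^(T-s))^2 := by
          refine pow_le_pow_left₀ (Finset.sum_nonneg fun i _ => pow_nonneg hmlam0 i) hb1 2
        have hid : (m:ℝ)^s * (((m:ℝ)*lam1)^(T-s))^2
            = (m:ℝ)^(s+(T-s)) * ((m:ℝ)*lam1^2)^(T-s) := by ring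
        have hmono2 : ((m:ℝ)*lam1^2)^(T-s) ≤ 1 + ((m:ℝ)*lam1^2)^T := by
          rcases le_or_gt ((m:ℝ)*lam1^2) 1 with h | h
          · have h5 := pow_le_one₀ (by positivity : (0:ℝ) ≤ (m:ℝ)*lam1^2) h (n := T-s)
            have h6 : (0:ℝ) ≤ ((m:ℝ)*lam1^2)^T := pow_nonneg (by positivity) T
            linarith
          · have h5 := pow_le_pow_right₀ h.le (show T-s ≤ T by omega)
            linarith
        have hid2 : (m:ℝ)^T * ((m:ℝ)*lam1^2)^T = (((m:ℝ)*lam1)^T)^2 := by ring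
        calc (m:ℝ)^s * (∑ i ∈ range (T - s + 1), ((m:ℝ)*lam1)^i)^2
            ≤ (m:ℝ)^s * (((T:ℝ)+1) * ((m:ℝ)*lam1)^(T-s))^2 :=
              mul_le_mul_of_nonneg_left hb2 (pow_nonneg (le_of_lt hm0R) s)
          _ = ((T:ℝ)+1)^2 * ((m:ℝ)^s * (((m:ℝ)*lam1)^(T-s))^2) := by ring
          _ = ((T:ℝ)+1)^2 * ((m:ℝ)^(s+(T-s)) * ((m:ℝ)*lam1^2)^(T-s)) := by rw [hid]
          _ ≤ ((T:ℝ)+1)^2 * ((m:ℝ)^T * (1 + ((m:ℝ)*lam1^2)^T)) := by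
              rw [hsd]
              refine mul_le_mul_of_nonneg_left
                (mul_le_mul_of_nonneg_left hmono2 (by positivity)) (by positivity)
          _ = ((T:ℝ)+1)^2 * ((m:ℝ)^T + (((m:ℝ)*lam1)^T)^2) := by
              rw [mul_add, mul_one, hid2]
      have est3 : ∑ s ∈ range (T+1), (m:ℝ)^s *
            (∑ i ∈ range (T - s + 1), ((m:ℝ)*lam1)^i)^2
          ≤ ((T:ℝ)+1)^3 * ((m:ℝ)^T + (((m:ℝ)*lam1)^T)^2) := by
        have h := Finset.sum_le_card_nsmul (range (T+1)) _
          (((T:ℝ)+1)^2 * ((m:ℝ)^T + (((m:ℝ)*lam1)^T)^2)) est2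
        rw [Finset.card_range, nsmul_eq_mul] at h
        refine h.trans (le_of_eq ?_)
        push_cast
        ring
      have hS2b : ∫ ω, (∑ k ∈ Finset.Icc 1 n, g (X k ω)) ^ 2 ∂μ
          ≤ 2*G^2*(((T:ℝ)+1) * ((m:ℝ)*lam1)^T)^2
            + 8*G^2*(((T:ℝ)+1)^3 * ((m:ℝ)^T + (((m:ℝ)*lam1)^T)^2)) := by
        refine hkey.trans ?_
        have e1 : (∑ s ∈ range (T+1), ((m:ℝ)*lam1)^s)^2
            ≤ (((T:ℝ)+1) * ((m:ℝ)*lam1)^T)^2 :=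
          pow_le_pow_left₀ (Finset.sum_nonneg fun s _ => pow_nonneg hmlam0 s) est1 2
        exact add_le_add (mul_le_mul_of_nonneg_left e1 (by positivity))
          (mul_le_mul_of_nonneg_left est3 (by positivity))
      rw [hfeq n, hTdef]
      have hninv0 : (0:ℝ) ≤ (n:ℝ)⁻¹ := by positivity
      have hn2 : ((n:ℝ)⁻¹)^2 ≤ ((m:ℝ) * ((m:ℝ)⁻¹)^T)^2 := pow_le_pow_left₀ hninv0 hninv 2
      have hAid : ((m:ℝ)*((m:ℝ)⁻¹)^T * ((m:ℝ)*lam1)^T) = (m:ℝ) * lam1^T := by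
        rw [mul_assoc, ← mul_pow]
        have hne : (m:ℝ) ≠ 0 := ne_of_gt hm0R
        have h9 : (m:ℝ)⁻¹ * ((m:ℝ)*lam1) = lam1 := by field_simp
        rw [h9]
      have hBid : ((m:ℝ)*((m:ℝ)⁻¹)^T)^2 * (m:ℝ)^T = (m:ℝ)^2 * ((m:ℝ)⁻¹)^T := by
        have h1 : ((m:ℝ)⁻¹)^T * (m:ℝ)^T = 1 := by
          rw [← mul_pow]
          have hne : (m:ℝ) ≠ 0 := ne_of_gt hm0R
          field_simp
          exact one_pow T
        calc ((m:ℝ)*((m:ℝ)⁻¹)^T)^2 * (m:ℝ)^T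
            = (m:ℝ)^2 * (((m:ℝ)⁻¹)^T * (((m:ℝ)⁻¹)^T * (m:ℝ)^T)) := by ring
          _ = (m:ℝ)^2 * ((m:ℝ)⁻¹)^T := by rw [h1, mul_one]
      have hCid : (lam1^2)^T = (lam1^T)^2 := pow_right_comm lam1 2 T
      have hp1 : (1:ℝ) ≤ (T:ℝ)+1 := by
        have : (0:ℝ) ≤ (T:ℝ) := Nat.cast_nonneg T
        linarith
      have hpp : ((T:ℝ)+1)^2 ≤ ((T:ℝ)+1)^3 := pow_le_pow_right₀ hp1 (by omega)
      calc ((n:ℝ)⁻¹)^2 * ∫ ω, (∑ k ∈ Finset.Icc 1 n, g (X k ω)) ^ 2 ∂μ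
          ≤ ((m:ℝ)*((m:ℝ)⁻¹)^T)^2
              * (2*G^2*(((T:ℝ)+1) * ((m:ℝ)*lam1)^T)^2
                + 8*G^2*(((T:ℝ)+1)^3 * ((m:ℝ)^T + (((m:ℝ)*lam1)^T)^2))) :=
            mul_le_mul hn2 hS2b (hkey_nonneg n) (by positivity)
        _ = 2*G^2*((T:ℝ)+1)^2*(((m:ℝ)*((m:ℝ)⁻¹)^T) * ((m:ℝ)*lam1)^T)^2
            + 8*G^2*((T:ℝ)+1)^3
              * (((m:ℝ)*((m:ℝ)⁻¹)^T)^2 * (m:ℝ)^T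
                + (((m:ℝ)*((m:ℝ)⁻¹)^T) * ((m:ℝ)*lam1)^T)^2) := by ring
        _ = 2*G^2*((T:ℝ)+1)^2*((m:ℝ) * lam1^T)^2
            + 8*G^2*((T:ℝ)+1)^3
              * ((m:ℝ)^2 * ((m:ℝ)⁻¹)^T + ((m:ℝ) * lam1^T)^2) := by rw [hAid, hBid]
        _ ≤ φ T := by
            simp only [hφdef]
            rw [hCid]
            have t1 : (0:ℝ) ≤ G^2*(m:ℝ)^2*(lam1^T)^2*(((T:ℝ)+1)^3-((T:ℝ)+1)^2) :=
              mul_nonneg (by positivity) (sub_nonneg.mpr hpp)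
            have t2 : (0:ℝ) ≤ G^2*(m:ℝ)^2*((m:ℝ)⁻¹)^T*((T:ℝ)+1)^3 := by positivity
            nlinarith [t1, t2]
    refine tendsto_of_tendsto_of_tendsto_of_le_of_le' tendsto_const_nhds
      (hφ.comp (tendsto_dep hm)) (Filter.Eventually.of_forall hf0) ?_
    filter_upwards [Filter.eventually_ge_atTop 2] with n hn using hbound n hn



end TreeAux

/-- Under the m-tree Markov model with spectral gap, the sample
average up to an arbitrary node n (nodes ordered level by level) converges in
L² to E_π(y), for any initial distribution of the seed, even though n need not
be a complete generation count. -/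
theorem partial_generation_sample_average_L2
    {Ω : Type*} {m0 : MeasurableSpace Ω} (μ : Measure Ω) [IsProbabilityMeasure μ]
    (N : ℕ) (hN : 2 ≤ N) (m : ℕ) (hm : 1 ≤ m)
    (P : Matrix (Fin N) (Fin N) ℝ)
    (hP_nonneg : ∀ i j, 0 ≤ P i j) (hP_rowsum : ∀ i, ∑ j, P i j = 1)
    (π : Fin N → ℝ) (hπ_pos : ∀ i, 0 < π i) (hπ_sum : ∑ i, π i = 1)
    (hrev : ∀ i j, π i * P i j = π j * P j i)
    (lam : Fin N → ℝ) (f : Fin N → Fin N → ℝ)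
    (heig : ∀ j, P.mulVec (f j) = lam j • f j)
    (horthonormal : ∀ a b, ∑ i, f a i * f b i * π i = if a = b then 1 else 0)
    (hlam1 : lam ⟨0, by omega⟩ = 1)
    (hlam2_pos : 0 < lam ⟨1, by omega⟩) (hlam2_lt1 : lam ⟨1, by omega⟩ < 1)
    (hgap : ∀ j : Fin N, 2 ≤ (j : ℕ) → |lam j| < lam ⟨1, by omega⟩)
    (y : Fin N → ℝ)
    (X : ℕ → Ω → Fin N)
    (pa : ℕ → ℕ) (hpa1 : pa 1 = 1)
    (hpa : ∀ k, 2 ≤ k → pa k = (k - 2) / m + 1)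
    (F : Filtration ℕ m0)
    (hadapted : ∀ n : ℕ, Measurable[F n] (X (n + 1)))
    (hMarkov : ∀ (k : ℕ) (g : Fin N → ℝ),
      μ[(fun ω => g (X (k + 2) ω)) | F k] =ᵐ[μ]
        fun ω => ∑ j, P (X (pa (k + 2)) ω) j * g j) :
    Tendsto (fun n : ℕ =>
        ∫ ω, ((n : ℝ)⁻¹ * (∑ k ∈ Finset.Icc 1 n, y (X k ω))
          - ∑ i, π i * y i) ^ 2 ∂μ)
      atTop (nhds 0) := by
  classical
  set j0 : Fin N := ⟨0, by omega⟩ with hj0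
  set lam1 : ℝ := lam ⟨1, by omega⟩ with hlam1def
  have hl0 : 0 ≤ lam1 := hlam2_pos.le
  -- completeness of the eigenbasis
  set B : Matrix (Fin N) (Fin N) ℝ := Matrix.of (fun a i => f a i * Real.sqrt (π i)) with hB
  have hBBT : B * Bᵀ = 1 := by
    ext a b
    rw [Matrix.mul_apply]
    simp only [Matrix.transpose_apply, hB, Matrix.of_apply]
    have hterm : ∀ i, f a i * Real.sqrt (π i) * (f b i * Real.sqrt (π i))
        = f a i * f b i * π i := by
      intro i
      have h := Real.mul_self_sqrt (hπ_pos i).le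
      calc f a i * Real.sqrt (π i) * (f b i * Real.sqrt (π i))
          = f a i * f b i * (Real.sqrt (π i) * Real.sqrt (π i)) := by ring
        _ = f a i * f b i * π i := by rw [h]
    rw [Finset.sum_congr rfl (fun i _ => hterm i), horthonormal a b, Matrix.one_apply]
  have hBTB : Bᵀ * B = 1 := mul_eq_one_comm.mp hBBT
  have hcompl : ∀ i k : Fin N, ∑ j, f j i * f j k = if i = k then (π i)⁻¹ else 0 := by
    intro i k
    have h : (Bᵀ * B) i k = (1 : Matrix (Fin N) (Fin N) ℝ) i k := by rw [hBTB]
    rw [Matrix.mul_apply] at h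
    simp only [Matrix.transpose_apply, hB, Matrix.of_apply] at h
    have h2 : (∑ j, f j i * f j k) * (Real.sqrt (π i) * Real.sqrt (π k))
        = if i = k then 1 else 0 := by
      rw [Finset.sum_mul]
      rw [Finset.sum_congr rfl (fun j _ => show f j i * f j k * (Real.sqrt (π i) * Real.sqrt (π k))
        = f j i * Real.sqrt (π i) * (f j k * Real.sqrt (π k)) from by ring)]
      rw [h, Matrix.one_apply]
    by_cases hik : i = k
    · subst hik
      rw [if_pos rfl] at h2 ⊢
      have hs : Real.sqrt (π i) * Real.sqrt (π i) = π i := Real.mul_self_sqrt (hπ_pos i).le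
      rw [hs] at h2
      exact eq_inv_of_mul_eq_one_left h2
    · rw [if_neg hik] at h2 ⊢
      have hs : 0 < Real.sqrt (π i) * Real.sqrt (π k) :=
        mul_pos (Real.sqrt_pos.mpr (hπ_pos i)) (Real.sqrt_pos.mpr (hπ_pos k))
      rcases mul_eq_zero.mp h2 with h3 | h3
      · exact h3
      · exact absurd h3 (ne_of_gt hs)
  have hexp : ∀ (v : Fin N → ℝ) (i : Fin N),
      ∑ j, (∑ k, v k * f j k * π k) * f j i = v i := by
    intro v i
    calc ∑ j, (∑ k, v k * f j k * π k) * f j i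
        = ∑ j, ∑ k, v k * π k * (f j i * f j k) := by
          refine Finset.sum_congr rfl (fun j _ => ?_)
          rw [Finset.sum_mul]
          exact Finset.sum_congr rfl (fun k _ => by ring)
      _ = ∑ k, ∑ j, v k * π k * (f j i * f j k) := Finset.sum_comm
      _ = ∑ k, v k * π k * (∑ j, f j i * f j k) := by
          refine Finset.sum_congr rfl (fun k _ => ?_)
          rw [Finset.mul_sum]
      _ = ∑ k, (if i = k then v k * π k * (π i)⁻¹ else 0) := by
          refine Finset.sum_congr rfl (fun k _ => ?_)
          rw [hcompl i k]
          split <;> simp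
      _ = v i * π i * (π i)⁻¹ := by
          rw [Finset.sum_ite_eq Finset.univ i (fun k => v k * π k * (π i)⁻¹), if_pos (Finset.mem_univ i)]
      _ = v i := by
          rw [mul_assoc, mul_inv_cancel₀ (ne_of_gt (hπ_pos i)), mul_one]
  -- projection identity
  have hproj : ∀ (e : Fin N → ℝ) (a : Fin N),
      ∑ i, (∑ j, e j * f j i) * f a i * π i = e a := by
    intro e a
    calc ∑ i, (∑ j, e j * f j i) * f a i * π i
        = ∑ i, ∑ j, e j * (f j i * f a i * π i) := by
          refine Finset.sum_congr rfl (fun i _ => ?_)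
          rw [Finset.sum_mul, Finset.sum_mul]
          exact Finset.sum_congr rfl (fun j _ => by ring)
      _ = ∑ j, e j * ∑ i, f j i * f a i * π i := by
          rw [Finset.sum_comm]
          exact Finset.sum_congr rfl (fun j _ => by rw [Finset.mul_sum])
      _ = ∑ j, (if j = a then e j else 0) := by
          refine Finset.sum_congr rfl (fun j _ => ?_)
          rw [horthonormal j a]
          split <;> simp
      _ = e a := by rw [Finset.sum_ite_eq' Finset.univ a e, if_pos (Finset.mem_univ a)]
  set c : Fin N → ℝ := fun j => ∑ k, y k * f j k * π k with hc
  set d : Fin N → ℝ := fun j => ∑ k, (1:ℝ) * f j k * π k with hd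
  have hdexp : ∀ i, ∑ j, d j * f j i = 1 := fun i => hexp (fun _ => 1) i
  have hyexp0 : ∀ i, ∑ j, c j * f j i = y i := fun i => hexp y i
  -- eigenvalue-1 eigenvector is constant
  have happ : ∀ i, ∑ j, (d j * lam j) * f j i = 1 := by
    intro i
    have hmv : ∀ j, lam j * f j i = ∑ k, P i k * f j k := by
      intro j
      have h := congrFun (heig j) i
      simp only [Matrix.mulVec, dotProduct, Pi.smul_apply, smul_eq_mul] at h
      exact h.symm
    calc ∑ j, (d j * lam j) * f j i
        = ∑ j, d j * ∑ k, P i k * f j k := by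
          refine Finset.sum_congr rfl (fun j _ => ?_)
          rw [← hmv j]
          ring
      _ = ∑ j, ∑ k, d j * (P i k * f j k) :=
          Finset.sum_congr rfl (fun j _ => Finset.mul_sum _ _ _)
      _ = ∑ k, ∑ j, d j * (P i k * f j k) := Finset.sum_comm
      _ = ∑ k, P i k * ∑ j, d j * f j k := by
          refine Finset.sum_congr rfl (fun k _ => ?_)
          rw [Finset.mul_sum]
          exact Finset.sum_congr rfl (fun j _ => by ring)
      _ = ∑ k, P i k * 1 := by
          exact Finset.sum_congr rfl (fun k _ => by rw [hdexp k])
      _ = 1 := by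
          simp only [mul_one]
          exact hP_rowsum i
  have hcoef : ∀ a, d a * lam a = d a := by
    intro a
    have h1 := hproj (fun j => d j * lam j) a
    have h2 := hproj d a
    have h3 : ∑ i, (∑ j, (d j * lam j) * f j i) * f a i * π i
        = ∑ i, (∑ j, d j * f j i) * f a i * π i := by
      refine Finset.sum_congr rfl (fun i _ => ?_)
      rw [happ i, hdexp i]
    rw [h1, h2] at h3
    exact h3
  have hlamabs : ∀ j : Fin N, j ≠ j0 → |lam j| ≤ lam1 := by
    intro j hj
    rcases lt_or_ge (j : ℕ) 2 with h2 | h2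
    · have hne : (j:ℕ) ≠ 0 := fun h => hj (Fin.ext h)
      have h1 : (j:ℕ) = 1 := by omega
      have : j = ⟨1, by omega⟩ := Fin.ext h1
      rw [this, hlam1def, abs_of_pos hlam2_pos]
    · exact (hgap j h2).le
  have hd0 : ∀ j : Fin N, j ≠ j0 → d j = 0 := by
    intro j hj
    have h1 := hcoef j
    have h2 : lam j ≠ 1 := by
      intro h
      have := hlamabs j hj
      rw [h] at this
      simp at this
      linarith [hlam2_lt1]
    have h3 : d j * (lam j - 1) = 0 := by linarith [h1]
    rcases mul_eq_zero.mp h3 with h | h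
    · exact h
    · exact absurd (by linarith : lam j = 1) h2
  have hf0 : ∀ i, d j0 * f j0 i = 1 := by
    intro i
    have h := hdexp i
    rw [Finset.sum_eq_single j0 (fun j _ hj => by rw [hd0 j hj, zero_mul])
      (fun h => absurd (Finset.mem_univ j0) h)] at h
    exact h
  have hd0sq : d j0 * d j0 = 1 := by
    have : d j0 * d j0 = ∑ i, (d j0 * f j0 i) * π i := by
      rw [hd, Finset.mul_sum]
      exact Finset.sum_congr rfl (fun i _ => by ring)
    rw [this, Finset.sum_congr rfl (fun i _ => by rw [hf0 i]), ]
    simp [hπ_sum]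
  have hybar : ∀ i, c j0 * f j0 i = ∑ i', π i' * y i' := by
    intro i
    have h1 : c j0 * d j0 = ∑ k, π k * y k := by
      rw [hc, Finset.sum_mul]
      calc ∑ k, y k * f j0 k * π k * d j0
          = ∑ k, y k * π k * (d j0 * f j0 k) := by
            exact Finset.sum_congr rfl (fun k _ => by ring)
        _ = ∑ k, π k * y k := by
            refine Finset.sum_congr rfl (fun k _ => ?_)
            rw [hf0 k]
            ring
    calc c j0 * f j0 i = c j0 * f j0 i * (d j0 * d j0) := by rw [hd0sq, mul_one]
      _ = (c j0 * d j0) * (d j0 * f j0 i) := by ring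
      _ = (c j0 * d j0) * 1 := by rw [hf0 i]
      _ = ∑ i', π i' * y i' := by rw [mul_one, h1]
  have hyexp : ∀ i, y i - (∑ i', π i' * y i') = ∑ j ∈ Finset.univ.erase j0, c j * f j i := by
    intro i
    rw [Finset.sum_erase_eq_sub (Finset.mem_univ j0), hyexp0 i, hybar i]
  -- measurability / integrability helpers
  have hXm : ∀ k : ℕ, 1 ≤ k → Measurable (X k) := by
    intro k hk
    have h := hadapted (k - 1)
    have hkk : k - 1 + 1 = k := by omega
    rw [hkk] at h
    exact h.mono (F.le _) le_rfl
  have hint : ∀ (h : Ω → ℝ) (C : ℝ), Measurable h → (∀ ω, |h ω| ≤ C) → Integrable h μ := by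
    intro h C hh hb
    refine (integrable_const C).mono' hh.aestronglyMeasurable (ae_of_all μ ?_)
    intro ω; simpa [Real.norm_eq_abs] using hb ω
  set Φ : Fin N → ℕ → Ω → ℝ :=
    fun j n ω => (n:ℝ)⁻¹ * ∑ k ∈ Finset.Icc 1 n, f j (X k ω) with hΦ
  set Gb : Fin N → ℝ := fun j => ∑ i, |f j i| with hGb
  have hGb0 : ∀ j, 0 ≤ Gb j := fun j => Finset.sum_nonneg fun i _ => abs_nonneg _
  have hGbb : ∀ j i, |f j i| ≤ Gb j := fun j i =>
    Finset.single_le_sum (fun i' _ => abs_nonneg (f j i')) (Finset.mem_univ i)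
  have hΦmeas : ∀ j n, Measurable (Φ j n) := by
    intro j n
    refine measurable_const.mul ?_
    refine Finset.measurable_sum _ (fun k hk => ?_)
    exact (Measurable.of_discrete (f := f j)).comp (hXm k (Finset.mem_Icc.mp hk).1)
  have hΦbd : ∀ j n ω, |Φ j n ω| ≤ Gb j := by
    intro j n ω
    rw [hΦ]
    simp only []
    rw [abs_mul]
    have h1 : |∑ k ∈ Finset.Icc 1 n, f j (X k ω)| ≤ (n:ℝ) * Gb j := by
      refine (Finset.abs_sum_le_sum_abs _ _).trans ?_
      have h2 : ∑ k ∈ Finset.Icc 1 n, |f j (X k ω)| ≤ ∑ _k ∈ Finset.Icc 1 n, Gb j :=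
        Finset.sum_le_sum fun k _ => hGbb j _
      refine h2.trans (le_of_eq ?_)
      rw [Finset.sum_const, Nat.card_Icc, Nat.add_sub_cancel, nsmul_eq_mul]
    have h3 : |((n:ℝ))⁻¹| = ((n:ℝ))⁻¹ := abs_of_nonneg (by positivity)
    rw [h3]
    calc ((n:ℝ))⁻¹ * |∑ k ∈ Finset.Icc 1 n, f j (X k ω)|
        ≤ ((n:ℝ))⁻¹ * ((n:ℝ) * Gb j) :=
          mul_le_mul_of_nonneg_left h1 (by positivity)
      _ = (((n:ℝ))⁻¹ * (n:ℝ)) * Gb j := by ring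
      _ ≤ 1 * Gb j := by
          refine mul_le_mul_of_nonneg_right ?_ (hGb0 j)
          rcases Nat.eq_zero_or_pos n with h | h
          · simp [h]
          · have : ((n:ℕ):ℝ) ≠ 0 := Nat.cast_ne_zero.mpr (by omega)
            rw [inv_mul_cancel₀ this]
      _ = Gb j := one_mul _
  have hΦsqint : ∀ j n, Integrable (fun ω => (Φ j n ω)^2) μ := by
    intro j n
    refine hint _ ((Gb j)^2) ((hΦmeas j n).pow_const 2) (fun ω => ?_)
    rw [abs_of_nonneg (sq_nonneg _), ← sq_abs]
    exact pow_le_pow_left₀ (abs_nonneg _) (hΦbd j n ω) 2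
  -- convergence of each eigen-average
  have hper : ∀ j ∈ Finset.univ.erase j0,
      Tendsto (fun n => ∫ ω, (Φ j n ω)^2 ∂μ) atTop (nhds 0) := by
    intro j hj
    have hjne : j ≠ j0 := Finset.ne_of_mem_erase hj
    exact TreeAux.eig_L2 μ m hm P X pa hpa1 hpa F hadapted hMarkov lam1 hl0 hlam2_lt1
      (f j) (lam j) (heig j) (hlamabs j hjne)
  -- pointwise identity
  have hptwise : ∀ n : ℕ, 1 ≤ n → ∀ ω : Ω,
      ((n:ℝ)⁻¹ * (∑ k ∈ Finset.Icc 1 n, y (X k ω)) - ∑ i, π i * y i)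
        = ∑ j ∈ Finset.univ.erase j0, c j * Φ j n ω := by
    intro n hn ω
    have hn0 : ((n:ℕ):ℝ) ≠ 0 := Nat.cast_ne_zero.mpr (by omega)
    have e2 : (n:ℝ)⁻¹ * (∑ k ∈ Finset.Icc 1 n, y (X k ω)) - (∑ i, π i * y i)
        = (n:ℝ)⁻¹ * (∑ k ∈ Finset.Icc 1 n, (y (X k ω) - ∑ i', π i' * y i')) := by
      rw [Finset.sum_sub_distrib, Finset.sum_const, Nat.card_Icc, Nat.add_sub_cancel,
        nsmul_eq_mul]
      field_simp
    rw [e2]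
    have e3 : ∑ k ∈ Finset.Icc 1 n, (y (X k ω) - ∑ i', π i' * y i')
        = ∑ j ∈ Finset.univ.erase j0, ∑ k ∈ Finset.Icc 1 n, c j * f j (X k ω) := by
      rw [Finset.sum_congr rfl (fun k _ => hyexp (X k ω))]
      exact Finset.sum_comm
    rw [e3, Finset.mul_sum]
    refine Finset.sum_congr rfl (fun j _ => ?_)
    rw [hΦ]
    simp only []
    rw [← Finset.mul_sum]
    ring
  -- integral bound
  have hbound : ∀ n : ℕ, 1 ≤ n →
      ∫ ω, ((n:ℝ)⁻¹ * (∑ k ∈ Finset.Icc 1 n, y (X k ω)) - ∑ i, π i * y i)^2 ∂μ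
        ≤ ((Finset.univ.erase j0).card : ℝ)
            * ∑ j ∈ Finset.univ.erase j0, (c j)^2 * ∫ ω, (Φ j n ω)^2 ∂μ := by
    intro n hn
    have heq : ∫ ω, ((n:ℝ)⁻¹ * (∑ k ∈ Finset.Icc 1 n, y (X k ω)) - ∑ i, π i * y i)^2 ∂μ
        = ∫ ω, (∑ j ∈ Finset.univ.erase j0, c j * Φ j n ω)^2 ∂μ := by
      congr 1
      funext ω
      rw [hptwise n hn ω]
    rw [heq]
    have hintL : Integrable (fun ω => (∑ j ∈ Finset.univ.erase j0, c j * Φ j n ω)^2) μ := by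
      refine hint _ ((∑ j ∈ Finset.univ.erase j0, |c j| * Gb j)^2)
        ((Finset.measurable_sum _ (fun j _ => measurable_const.mul (hΦmeas j n))).pow_const 2)
        (fun ω => ?_)
      rw [abs_of_nonneg (sq_nonneg _), ← sq_abs]
      refine pow_le_pow_left₀ (abs_nonneg _) ?_ 2
      refine (Finset.abs_sum_le_sum_abs _ _).trans (Finset.sum_le_sum fun j _ => ?_)
      rw [abs_mul]
      exact mul_le_mul_of_nonneg_left (hΦbd j n ω) (abs_nonneg _)
    have hintR : Integrable (fun ω => ((Finset.univ.erase j0).card : ℝ)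
        * ∑ j ∈ Finset.univ.erase j0, (c j * Φ j n ω)^2) μ := by
      refine Integrable.const_mul ?_ _
      refine integrable_finset_sum _ (fun j _ => ?_)
      have : (fun ω => (c j * Φ j n ω)^2) = fun ω => (c j)^2 * (Φ j n ω)^2 := by
        funext ω; ring
      rw [this]
      exact (hΦsqint j n).const_mul _
    have hptb : ∀ ω, (∑ j ∈ Finset.univ.erase j0, c j * Φ j n ω)^2
        ≤ ((Finset.univ.erase j0).card : ℝ) * ∑ j ∈ Finset.univ.erase j0, (c j * Φ j n ω)^2 := by
      intro ω
      exact_mod_cast sq_sum_le_card_mul_sum_sq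
        (s := Finset.univ.erase j0) (f := fun j => c j * Φ j n ω)
    calc ∫ ω, (∑ j ∈ Finset.univ.erase j0, c j * Φ j n ω)^2 ∂μ
        ≤ ∫ ω, ((Finset.univ.erase j0).card : ℝ)
            * ∑ j ∈ Finset.univ.erase j0, (c j * Φ j n ω)^2 ∂μ :=
          integral_mono hintL hintR hptb
      _ = ((Finset.univ.erase j0).card : ℝ)
            * ∑ j ∈ Finset.univ.erase j0, (c j)^2 * ∫ ω, (Φ j n ω)^2 ∂μ := by
          rw [integral_const_mul]
          congr 1
          rw [integral_finset_sum _ (fun j _ => ?_)]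
          · refine Finset.sum_congr rfl (fun j _ => ?_)
            have : (fun ω => (c j * Φ j n ω)^2) = fun ω => (c j)^2 * (Φ j n ω)^2 := by
              funext ω; ring
            rw [this, integral_const_mul]
          · have : (fun ω => (c j * Φ j n ω)^2) = fun ω => (c j)^2 * (Φ j n ω)^2 := by
              funext ω; ring
            rw [this]
            exact (hΦsqint j n).const_mul _
  -- conclusion
  have hU : Tendsto (fun n => ((Finset.univ.erase j0).card : ℝ)
      * ∑ j ∈ Finset.univ.erase j0, (c j)^2 * ∫ ω, (Φ j n ω)^2 ∂μ) atTop (nhds 0) := by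
    have h1 : Tendsto (fun n => ∑ j ∈ Finset.univ.erase j0,
        (c j)^2 * ∫ ω, (Φ j n ω)^2 ∂μ) atTop (nhds 0) := by
      have h2 := tendsto_finset_sum (Finset.univ.erase j0)
        (fun j hj => (hper j hj).const_mul ((c j)^2))
      simpa using h2
    have h3 := h1.const_mul ((Finset.univ.erase j0).card : ℝ)
    simpa using h3
  refine tendsto_of_tendsto_of_tendsto_of_le_of_le' tendsto_const_nhds hU
    (Filter.Eventually.of_forall (fun n => integral_nonneg (fun ω => sq_nonneg _))) ?_
  filter_upwards [Filter.eventually_ge_atTop 1] with n hn using hbound n hn
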